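/- Assume n ≥ 2, H = {B t : t ∈ ℝ^p} with Bᵀ B = I_p, H ∩ int K_{n+1} = ∅, and H ∩ K_{n+1} = {α d : α ≥ 0} for some d ∈ bd K_{n+1} with d ≠ 0. Then for every u ∈ H with u ∉ {α d : α ∈ ℝ}, one has −û ∉ K_{n+1}. -/

import Mathlib

/-- Euclidean norm of the tail `x₁` of `x = (x₀; x₁) ∈ ℝ × ℝⁿ`. -/
noncomputable def tailNorm {n : ℕ} (x : EuclideanSpace ℝ (Fin (n + 1))) : ℝ :=
  Real.sqrt (∑ i : Fin n, x i.succ ^ 2)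

/-- The second-order cone `K_{n+1} = {(x₀; x₁) : ‖x₁‖ ≤ x₀}`. -/
def soc (n : ℕ) : Set (EuclideanSpace ℝ (Fin (n + 1))) :=
  {x | tailNorm x ≤ x 0}

/-- The boundary of the second-order cone: `{(x₀; x₁) : ‖x₁‖ = x₀}`. -/
def socBd (n : ℕ) : Set (EuclideanSpace ℝ (Fin (n + 1))) :=
  {x | tailNorm x = x 0}

/-- The interior of the second-order cone: `{(x₀; x₁) : ‖x₁‖ < x₀}`. -/
def socInt (n : ℕ) : Set (EuclideanSpace ℝ (Fin (n + 1))) :=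
  {x | tailNorm x < x 0}

/-- `x̂ = (x₀; −x₁)` for `x = (x₀; x₁)`. -/
def socHat {n : ℕ} (x : EuclideanSpace ℝ (Fin (n + 1))) : EuclideanSpace ℝ (Fin (n + 1)) :=
  WithLp.toLp 2 (fun i => if i = 0 then x 0 else -(x i))

/-- `B t` viewed as an element of Euclidean space. -/
def mvE {m p : ℕ} (B : Matrix (Fin m) (Fin p) ℝ) (t : Fin p → ℝ) : EuclideanSpace ℝ (Fin m) :=
  WithLp.toLp 2 (fun i => B.mulVec t i)

/-- A Euclidean vector viewed as a plain function. -/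
def toFun {m : ℕ} (x : EuclideanSpace ℝ (Fin m)) : Fin m → ℝ := x

/-- Assume `n ≥ 2`, `H = {B t : t ∈ ℝ^p}` with `Bᵀ B = I_p`, `H ∩ int K_{n+1} = ∅`, and
`H ∩ K_{n+1} = {α d : α ≥ 0}` for some `d ∈ bd K_{n+1}` with `d ≠ 0`. Then for every `u ∈ H`
with `u ∉ {α d : α ∈ ℝ}`, one has `−û ∉ K_{n+1}`. -/
theorem stmt5 (n p : ℕ) (hn : 2 ≤ n)
    (B : Matrix (Fin (n + 1)) (Fin p) ℝ) (hB : B.transpose * B = 1)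
    (H : Set (EuclideanSpace ℝ (Fin (n + 1))))
    (hH : H = {u | ∃ t : Fin p → ℝ, u = mvE B t})
    (hdisj : H ∩ socInt n = ∅)
    (d : EuclideanSpace ℝ (Fin (n + 1))) (hd : d ∈ socBd n) (hd0 : d ≠ 0)
    (hray : H ∩ soc n = {x | ∃ α : ℝ, 0 ≤ α ∧ x = α • d}) :
    ∀ u ∈ H, u ∉ {x | ∃ α : ℝ, x = α • d} → -(socHat u) ∉ soc n := by
  intro u hu hnotmul hcon
  have hmem : -u ∈ H := by
    rw [hH] at hu ⊢
    obtain ⟨t, ht⟩ := hu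
    refine ⟨-t, ?_⟩
    ext i
    simp [ht, mvE, Matrix.mulVec_neg]
  have hnotK : -u ∉ soc n := by
    intro h
    have hx : -u ∈ H ∩ soc n := ⟨hmem, h⟩
    rw [hray] at hx
    obtain ⟨α, hα, heq⟩ := hx
    exact hnotmul ⟨-α, by rw [neg_smul, ← heq, neg_neg]⟩
  apply hnotK
  have h1 : tailNorm (-(socHat u)) = tailNorm (-u) := by
    unfold tailNorm
    congr 1
    refine Finset.sum_congr rfl fun i _ => ?_
    have h2 : (-(socHat u)) i.succ = u i.succ := by
      simp [socHat, Fin.succ_ne_zero]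
    have h3 : (-u) i.succ = -(u i.succ) := rfl
    rw [h2, h3, neg_sq]
  have h4 : (-(socHat u)) 0 = (-u) 0 := by
    simp [socHat]
  have := hcon
  simp only [soc, Set.mem_setOf_eq] at this ⊢
  rw [h1, h4] at this
  exact this
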